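/- For all integers n ≥ 1 and k ≥ 1, the number of finite sets P of words over a k-letter alphabet (i.e., finite subsets of List (Fin k)) such that |P| = n and P is closed under taking prefixes (in particular the empty word lies in P, and the word obtained by deleting the last letter of any nonempty word of P again lies in P) is equal to (1/n)·C(kn, n-1); equivalently, n times this count equals C(kn, n-1). -/

import Mathlib

/-- weight of a letter: `true` (internal node) ↦ k-1, `false` (leaf) ↦ -1. -/
def wt (k : ℕ) (b : Bool) : ℤ := if b then (k : ℤ) - 1 else -1

/-- weight sum of a word. -/
def wsum (k : ℕ) (l : List Bool) : ℤ := (l.map (wt k)).sum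

/-- a word is good if every proper prefix has nonnegative weight sum. -/
def Good (k : ℕ) (l : List Bool) : Prop := ∀ j < l.length, 0 ≤ wsum k (l.take j)

@[simp] lemma wsum_nil (k : ℕ) : wsum k [] = 0 := rfl

@[simp] lemma wsum_append (k : ℕ) (l₁ l₂ : List Bool) :
    wsum k (l₁ ++ l₂) = wsum k l₁ + wsum k l₂ := by
  simp [wsum]

@[simp] lemma wsum_cons (k : ℕ) (b : Bool) (l : List Bool) :
    wsum k (b :: l) = wt k b + wsum k l := by simp [wsum]

lemma neg_one_le_wt (k : ℕ) (b : Bool) : -1 ≤ wt k b := by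
  cases b <;> simp [wt] <;> omega

lemma wsum_eq (k : ℕ) (l : List Bool) :
    wsum k l = (k : ℤ) * l.count true - l.length := by
  induction l with
  | nil => simp
  | cons b t ih =>
    cases b <;> simp [ih, wt, List.count_cons] <;> ring

lemma wsum_take_add_one (k : ℕ) (l : List Bool) (j : ℕ) (hj : j < l.length) :
    wsum k (l.take (j+1)) = wsum k (l.take j) + wt k (l.get ⟨j, hj⟩) := by
  have : l[j]? = some (l.get ⟨j, hj⟩) := by
    simp [List.getElem?_eq_getElem hj]
  have h2 : l.take (j+1) = l.take j ++ [l.get ⟨j, hj⟩] := by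
    rw [List.take_succ, this]; rfl
  rw [h2, wsum_append]; simp

lemma good_iff_prefix (k : ℕ) (l : List Bool) :
    Good k l ↔ ∀ p, p <+: l → p ≠ l → 0 ≤ wsum k p := by
  constructor
  · intro h p hp hne
    have hlen : p.length < l.length := by
      rcases lt_or_eq_of_le hp.length_le with h' | h'
      · exact h'
      · exact absurd (hp.eq_of_length h') hne
    have := h p.length hlen
    rwa [← List.prefix_iff_eq_take.mp hp] at this
  · intro h j hj
    refine h _ (List.take_prefix _ _) ?_
    intro he
    have := congrArg List.length he
    simp [Nat.min_eq_left hj.le] at this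
    omega

/-- a "block": a good word of total weight -1. -/
def IsBlock (k : ℕ) (l : List Bool) : Prop := Good k l ∧ wsum k l = -1

lemma IsBlock.ne_nil {k : ℕ} {l : List Bool} (h : IsBlock k l) : l ≠ [] := by
  intro he; rw [he] at h; simp [IsBlock] at h

/-- proper prefixes of a join of blocks have weight sum > -(number of blocks). -/
lemma join_proper_prefix {k : ℕ} (L : List (List Bool)) (hL : ∀ b ∈ L, IsBlock k b) :
    ∀ q, q <+: L.flatten → q ≠ L.flatten → (1 : ℤ) - L.length ≤ wsum k q := by
  induction L with
  | nil => intro q hq hne; exact absurd (List.prefix_nil.mp hq) hne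
  | cons b L ih =>
    intro q hq hne
    rw [List.flatten_cons] at hq hne
    have hb : IsBlock k b := hL b List.mem_cons_self
    rcases List.prefix_or_prefix_of_prefix hq (List.prefix_append b L.flatten) with h | h
    · -- q <+: b
      rcases eq_or_ne q b with rfl | hqb
      · -- q = b : sum = -1, need L nonempty
        rcases List.eq_nil_or_concat L with rfl | ⟨L', a, rfl⟩
        · simp at hne
        · rw [hb.2]; simp
      · have := (good_iff_prefix k b).mp hb.1 q h hqb
        have : (0:ℤ) ≤ wsum k q := this
        simp only [List.length_cons]
        push_cast
        omega
    · -- b <+: q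
      obtain ⟨q', rfl⟩ := h
      have hq' : q' <+: L.flatten := by
        rcases hq with ⟨r, hr⟩
        exact ⟨r, by simpa using hr⟩
      have hne' : q' ≠ L.flatten := fun he => hne (by rw [he])
      have := ih (fun c hc => hL c (List.mem_cons_of_mem _ hc)) q' hq' hne'
      rw [wsum_append, hb.2]
      simp only [List.length_cons]
      push_cast
      omega

/-- splitting a word of weight -j whose proper prefixes have weight ≥ 1-j into j blocks. -/
lemma block_split {k : ℕ} : ∀ (j : ℕ) (v : List Bool),
    wsum k v = -(j : ℤ) → (∀ q, q <+: v → q ≠ v → (1:ℤ) - j ≤ wsum k q) →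
    ∃ L : List (List Bool), L.length = j ∧ (∀ b ∈ L, IsBlock k b) ∧ L.flatten = v := by
  intro j
  induction j with
  | zero =>
    intro v hv hq
    rcases v.eq_nil_or_concat with rfl | ⟨v', a, rfl⟩
    · exact ⟨[], rfl, by simp, rfl⟩
    · exfalso
      have := hq [] List.nil_prefix (by simp)
      simp at this
  | succ j ih =>
    intro v hv hq
    -- first hitting time of -1
    have hvne : v ≠ [] := by
      intro h0
      rw [h0, wsum_nil] at hv
      have : ((j:ℤ) + 1) = 0 := by push_cast at hv; omega
      omega
    classical
    have hP : ∃ t, t ≤ v.length ∧ wsum k (v.take t) < 0 := by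
      refine ⟨v.length, le_refl _, ?_⟩
      rw [List.take_length, hv]
      push_cast; omega
    let t := Nat.find hP
    obtain ⟨ht_le, ht_neg⟩ : t ≤ v.length ∧ wsum k (v.take t) < 0 := Nat.find_spec hP
    have ht_pos : 0 < t := by
      rcases Nat.eq_zero_or_pos t with h0 | h; swap; exact h
      exfalso; have := ht_neg; rw [h0] at this; simp at this
    have ht_prev : 0 ≤ wsum k (v.take (t-1)) := by
      by_contra hc
      have := Nat.find_min hP (m := t - 1) (by omega)
      push_neg at this
      have := this (by omega)
      omega
    have ht_lt : t - 1 < v.length := by omega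
    have hstep : wsum k (v.take t) = wsum k (v.take (t-1)) + wt k (v.get ⟨t-1, ht_lt⟩) := by
      have := wsum_take_add_one k v (t-1) ht_lt
      rw [show t - 1 + 1 = t by omega] at this
      exact this
    have hm1 : wsum k (v.take t) = -1 := by
      have := neg_one_le_wt k (v.get ⟨t-1, ht_lt⟩)
      omega
    -- the first block
    have hblock : IsBlock k (v.take t) := by
      constructor
      · intro s hs
        have hs' : s < t := by simpa [Nat.min_eq_left ht_le] using hs
        rw [List.take_take, Nat.min_eq_left hs'.le]
        by_contra hc
        have := Nat.find_min hP (m := s) hs'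
        push_neg at this
        have := this (by omega)
        omega
      · exact hm1
    -- the rest
    have hrest_sum : wsum k (v.drop t) = -(j : ℤ) := by
      have : wsum k (v.take t) + wsum k (v.drop t) = wsum k v := by
        rw [← wsum_append, List.take_append_drop]
      push_cast at hv ⊢; omega
    have hrest_pre : ∀ q, q <+: v.drop t → q ≠ v.drop t → (1:ℤ) - j ≤ wsum k q := by
      intro q hqp hqne
      have h1 : v.take t ++ q <+: v := by
        calc v.take t ++ q <+: v.take t ++ v.drop t := (List.prefix_append_right_inj _).mpr hqp
        _ = v := List.take_append_drop _ _
      have h2 : v.take t ++ q ≠ v := by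
        intro he
        apply hqne
        have : v.take t ++ q = v.take t ++ v.drop t := by rw [he, List.take_append_drop]
        exact List.append_cancel_left this
      have := hq _ h1 h2
      rw [wsum_append, hm1] at this
      push_cast at this ⊢; omega
    obtain ⟨L, hL1, hL2, hL3⟩ := ih (v.drop t) hrest_sum hrest_pre
    refine ⟨v.take t :: L, by simp [hL1], ?_, by simp [hL3]⟩
    intro b hb
    rcases List.mem_cons.mp hb with rfl | hb
    · exact hblock
    · exact hL2 b hb

inductive KTree (k : ℕ) : Type
  | leaf : KTree k
  | node : (Fin k → KTree k) → KTree k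

namespace KTree
variable {k : ℕ}

def internals : KTree k → ℕ
  | leaf => 0
  | node c => 1 + ∑ i, internals (c i)

def code : KTree k → List Bool
  | leaf => [false]
  | node c => true :: (List.ofFn fun i => code (c i)).flatten

lemma code_ne_nil (t : KTree k) : code t ≠ [] := by
  cases t <;> simp [code]

lemma wsum_flatten (L : List (List Bool)) :
    wsum k L.flatten = (L.map (wsum k)).sum := by
  induction L with
  | nil => simp
  | cons b L ih => simp [ih]

lemma wsum_code (t : KTree k) : wsum k (code t) = -1 := by
  induction t with
  | leaf => simp [code, wt]
  | node c ih =>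
    rw [code, wsum_cons, wsum_flatten, List.map_ofFn, List.sum_ofFn]
    simp only [Function.comp]
    rw [Finset.sum_congr rfl (fun i _ => ih i)]
    simp [wt]
    push_cast
    ring

lemma length_code (t : KTree k) : (code t).length = k * internals t + 1 := by
  induction t with
  | leaf => simp [code, internals]
  | node c ih =>
    rw [code, internals]
    simp only [List.length_cons, List.length_flatten, List.map_ofFn, List.sum_ofFn,
      Function.comp]
    rw [Finset.sum_congr rfl (fun i _ => ih i)]
    rw [Finset.sum_add_distrib]
    simp [Finset.mul_sum, Nat.mul_add, Nat.mul_one]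
    ring

lemma count_code (t : KTree k) : (code t).count true = internals t := by
  induction t with
  | leaf => simp [code, internals]
  | node c ih =>
    rw [code, internals]
    rw [List.count_cons]
    simp only [List.count_flatten, List.map_ofFn, List.sum_ofFn, Function.comp]
    rw [Finset.sum_congr rfl (fun i _ => ih i)]
    simp [Nat.add_comm]

lemma isBlock_code (t : KTree k) : IsBlock k (code t) := by
  induction t with
  | leaf =>
    refine ⟨(good_iff_prefix k _).mpr ?_, wsum_code _⟩
    intro p hp hne
    cases p with
    | nil => simp
    | cons a p' =>
      exfalso
      obtain ⟨r, hr⟩ := hp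
      simp [code] at hr
      exact hne (by simp [code, hr.1, hr.2.1])
  | node c ih =>
    refine ⟨(good_iff_prefix k _).mpr ?_, wsum_code _⟩
    intro p hp hne
    cases p with
    | nil => simp
    | cons a p' =>
      obtain ⟨r, hr⟩ := hp
      rw [code] at hr
      rw [List.cons_append] at hr
      obtain ⟨ha, hr2⟩ := List.cons_eq_cons.mp hr
      subst ha
      have hq : p' <+: (List.ofFn fun i => code (c i)).flatten := ⟨r, hr2⟩
      have hqne : p' ≠ (List.ofFn fun i => code (c i)).flatten := by
        intro he
        exact hne (by rw [code, he])
      have hblocks : ∀ b ∈ (List.ofFn fun i => code (c i)), IsBlock k b := by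
        intro b hb
        obtain ⟨i, rfl⟩ := List.mem_ofFn.mp hb
        exact ih i
      have := join_proper_prefix _ hblocks p' hq hqne
      rw [List.length_ofFn] at this
      rw [wsum_cons]
      have hwt : wt k true = (k:ℤ) - 1 := rfl
      rw [hwt]
      omega

lemma block_eq_of_append {k : ℕ} {b₁ b₂ r₁ r₂ : List Bool} (h1 : IsBlock k b₁)
    (h2 : IsBlock k b₂) (he : b₁ ++ r₁ = b₂ ++ r₂) : b₁ = b₂ := by
  have hp1 : b₁ <+: b₂ ++ r₂ := he ▸ List.prefix_append b₁ r₁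
  have hp2 : b₂ <+: b₂ ++ r₂ := List.prefix_append b₂ r₂
  rcases List.prefix_or_prefix_of_prefix hp1 hp2 with h | h
  · rcases eq_or_ne b₁ b₂ with h' | h'
    · exact h'
    · exfalso
      have := (good_iff_prefix k b₂).mp h2.1 b₁ h h'
      have h1s := h1.2
      omega
  · rcases eq_or_ne b₂ b₁ with h' | h'
    · exact h'.symm
    · exfalso
      have := (good_iff_prefix k b₁).mp h1.1 b₂ h h'
      have h2s := h2.2
      omega

lemma blocks_join_eq {k : ℕ} : ∀ (L₁ L₂ : List (List Bool)), (∀ b ∈ L₁, IsBlock k b) →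
    (∀ b ∈ L₂, IsBlock k b) → L₁.flatten = L₂.flatten → L₁.length = L₂.length → L₁ = L₂ := by
  intro L₁
  induction L₁ with
  | nil =>
    intro L₂ _ _ _ hlen
    cases L₂ with
    | nil => rfl
    | cons b L => simp at hlen
  | cons b₁ M₁ ih =>
    intro L₂ hb1 hb2 hj hlen
    cases L₂ with
    | nil => simp at hlen
    | cons b₂ M₂ =>
      simp only [List.flatten_cons] at hj
      have hbe : b₁ = b₂ :=
        block_eq_of_append (hb1 b₁ (by simp)) (hb2 b₂ (by simp)) hj
      subst hbe
      have hj' : M₁.flatten = M₂.flatten := List.append_cancel_left hj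
      have := ih M₂ (fun c hc => hb1 c (by simp [hc])) (fun c hc => hb2 c (by simp [hc]))
        hj' (by simpa using hlen)
      rw [this]

lemma code_injective : Function.Injective (code (k := k)) := by
  intro t
  induction t with
  | leaf =>
    intro s he
    cases s with
    | leaf => rfl
    | node c =>
      exfalso
      rw [code, code] at he
      exact Bool.noConfusion (List.cons_eq_cons.mp he).1
  | node c ih =>
    intro s he
    cases s with
    | leaf =>
      exfalso
      rw [code, code] at he
      exact Bool.noConfusion (List.cons_eq_cons.mp he).1
    | node c' =>
      rw [code, code] at he
      have hj := List.cons_eq_cons.mp he |>.2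
      have := blocks_join_eq (List.ofFn fun i => code (c i)) (List.ofFn fun i => code (c' i))
        (by intro b hb
            obtain ⟨i, rfl⟩ := List.mem_ofFn.mp hb
            exact isBlock_code _)
        (by intro b hb
            obtain ⟨i, rfl⟩ := List.mem_ofFn.mp hb
            exact isBlock_code _)
        hj (by simp)
      have hfun : ∀ i, code (c i) = code (c' i) := fun i =>
        congrFun (List.ofFn_inj.mp this) i
      have : c = c' := funext fun i => ih i (hfun i)
      rw [this]

lemma exists_code {k : ℕ} : ∀ (N : ℕ) (l : List Bool), l.length ≤ N → Good k l →
    wsum k l = -1 → ∃ t : KTree k, code t = l := by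
  intro N
  induction N with
  | zero =>
    intro l hlen _ hsum
    exfalso
    have : l = [] := List.length_eq_zero_iff.mp (Nat.le_zero.mp hlen)
    rw [this] at hsum; simp at hsum
  | succ N ih =>
    intro l hlen hgood hsum
    have hlne : l ≠ [] := by intro h; rw [h] at hsum; simp at hsum
    cases l with
    | nil => exact absurd rfl hlne
    | cons b l' =>
      cases b with
      | false =>
        -- must be [false]
        have : l' = [] := by
          by_contra h
          have h1 : 1 < (false :: l').length := by
            simp only [List.length_cons]
            have := List.length_pos_iff.mpr h
            omega
          have := hgood 1 h1
          rw [show (false :: l').take 1 = [false] from rfl] at this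
          norm_num [wsum, wt] at this
        rw [this]
        exact ⟨KTree.leaf, rfl⟩
      | true =>
        have hv_sum : wsum k l' = -(k : ℤ) := by
          have : wsum k (true :: l') = wt k true + wsum k l' := wsum_cons ..
          rw [hsum] at this
          have hwt : wt k true = (k:ℤ) - 1 := rfl
          rw [hwt] at this
          omega
        have hv_pre : ∀ q, q <+: l' → q ≠ l' → (1:ℤ) - k ≤ wsum k q := by
          intro q hq hne
          have hq2 : (true :: q) <+: (true :: l') := by
            obtain ⟨r, hr⟩ := hq
            exact ⟨r, by rw [List.cons_append, hr]⟩
          have hne2 : (true :: q) ≠ (true :: l') := fun h => hne (List.cons_eq_cons.mp h).2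
          have := (good_iff_prefix k _).mp hgood _ hq2 hne2
          rw [wsum_cons] at this
          have hwt : wt k true = (k:ℤ) - 1 := rfl
          rw [hwt] at this
          omega
        obtain ⟨L, hL1, hL2, hL3⟩ := block_split k l' hv_sum hv_pre
        -- each block gives a tree by induction
        have hsub : ∀ i : Fin k, ∃ t : KTree k, code t = L.get ⟨i, by rw [hL1]; exact i.2⟩ := by
          intro i
          set b := L.get ⟨i, by rw [hL1]; exact i.2⟩ with hb
          have hbmem : b ∈ L := List.get_mem ..
          have hbl : IsBlock k b := hL2 b hbmem
          have hble : b.length ≤ N := by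
            have h1 : b.length ≤ L.flatten.length :=
              (List.infix_of_mem_flatten hbmem).length_le
            have h2 : L.flatten.length = l'.length := by rw [hL3]
            have h3 : (true :: l').length ≤ N + 1 := hlen
            simp at h3
            omega
          exact ih b hble hbl.1 hbl.2
        choose f hf using hsub
        refine ⟨KTree.node f, ?_⟩
        rw [code]
        congr 1
        rw [← hL3]
        congr 1
        have : (List.ofFn fun i => code (f i)) = List.ofFn fun i : Fin k => L.get ⟨i, by rw [hL1]; exact i.2⟩ := by
          congr 1
          funext i
          exact hf i
        rw [this]
        apply List.ext_get (by simp [hL1])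
        intro m h1 h2
        simp [List.get_ofFn]

def toFinset : KTree k → Finset (List (Fin k))
  | leaf => ∅
  | node c => insert [] (Finset.univ.biUnion fun i => (toFinset (c i)).image (List.cons i))

lemma mem_toFinset_node {c : Fin k → KTree k} {w : List (Fin k)} :
    w ∈ toFinset (node c) ↔ w = [] ∨ ∃ i w', w = i :: w' ∧ w' ∈ toFinset (c i) := by
  rw [toFinset]
  simp only [Finset.mem_insert, Finset.mem_biUnion, Finset.mem_univ, true_and,
    Finset.mem_image]
  constructor
  · rintro (h | ⟨i, w', hw', rfl⟩)
    · exact Or.inl h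
    · exact Or.inr ⟨i, w', rfl, hw'⟩
  · rintro (h | ⟨i, w', rfl, hw'⟩)
    · exact Or.inl h
    · exact Or.inr ⟨i, w', hw', rfl⟩

lemma card_toFinset (t : KTree k) : (toFinset t).card = internals t := by
  induction t with
  | leaf => simp [toFinset, internals]
  | node c ih =>
    rw [toFinset, internals]
    rw [Finset.card_insert_of_notMem]
    · rw [Finset.card_biUnion]
      · rw [Nat.add_comm]
        congr 1
        refine Finset.sum_congr rfl fun i _ => ?_
        rw [Finset.card_image_of_injective _ (fun a b h => (List.cons_eq_cons.mp h).2), ih i]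
      · intro i _ j _ hij
        intro s hs1 hs2 w hw
        exfalso
        have h1 := hs1 hw
        have h2 := hs2 hw
        simp only [Finset.mem_image] at h1 h2
        obtain ⟨w1, _, rfl⟩ := h1
        obtain ⟨w2, _, he⟩ := h2
        exact hij ((List.cons_eq_cons.mp he).1.symm)
    · simp only [Finset.mem_biUnion, Finset.mem_univ, true_and, Finset.mem_image, not_exists]
      rintro i w ⟨_, he⟩
      exact List.cons_ne_nil _ _ he

lemma toFinset_prefix_closed (t : KTree k) :
    ∀ w ∈ toFinset t, ∀ p : List (Fin k), p <+: w → p ∈ toFinset t := by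
  induction t with
  | leaf => intro w hw; simp [toFinset] at hw
  | node c ih =>
    intro w hw p hp
    rcases mem_toFinset_node.mp hw with rfl | ⟨i, w', rfl, hw'⟩
    · rw [List.prefix_nil.mp hp]
      exact hw
    · cases p with
      | nil => exact mem_toFinset_node.mpr (Or.inl rfl)
      | cons a p' =>
        obtain ⟨r, hr⟩ := hp
        rw [List.cons_append] at hr
        obtain ⟨ha, hr2⟩ := List.cons_eq_cons.mp hr
        subst ha
        exact mem_toFinset_node.mpr (Or.inr ⟨a, p', rfl, ih a w' hw' p' ⟨r, hr2⟩⟩)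

lemma toFinset_injective : Function.Injective (toFinset (k := k)) := by
  intro t
  induction t with
  | leaf =>
    intro s he
    cases s with
    | leaf => rfl
    | node c =>
      exfalso
      have : ([] : List (Fin k)) ∈ toFinset (node c) := mem_toFinset_node.mpr (Or.inl rfl)
      rw [← he] at this
      simp [toFinset] at this
  | node c ih =>
    intro s he
    cases s with
    | leaf =>
      exfalso
      have : ([] : List (Fin k)) ∈ toFinset (node c) := mem_toFinset_node.mpr (Or.inl rfl)
      rw [he] at this
      simp [toFinset] at this
    | node c' =>
      have hsub : ∀ i, toFinset (c i) = toFinset (c' i) := by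
        intro i
        ext w
        constructor
        · intro hw
          have : (i :: w) ∈ toFinset (node c) := mem_toFinset_node.mpr (Or.inr ⟨i, w, rfl, hw⟩)
          rw [he] at this
          rcases mem_toFinset_node.mp this with h | ⟨j, w', hjw, hw'⟩
          · exact absurd h (List.cons_ne_nil _ _)
          · obtain ⟨h1, h2⟩ := List.cons_eq_cons.mp hjw
            subst h1; subst h2; exact hw'
        · intro hw
          have : (i :: w) ∈ toFinset (node c') := mem_toFinset_node.mpr (Or.inr ⟨i, w, rfl, hw⟩)
          rw [← he] at this
          rcases mem_toFinset_node.mp this with h | ⟨j, w', hjw, hw'⟩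
          · exact absurd h (List.cons_ne_nil _ _)
          · obtain ⟨h1, h2⟩ := List.cons_eq_cons.mp hjw
            subst h1; subst h2; exact hw'
      have : c = c' := funext fun i => ih i (hsub i)
      rw [this]

lemma exists_toFinset {k : ℕ} : ∀ (N : ℕ) (P : Finset (List (Fin k))), P.card ≤ N →
    (∀ w ∈ P, ∀ p : List (Fin k), p <+: w → p ∈ P) → ∃ t : KTree k, toFinset t = P := by
  intro N
  induction N with
  | zero =>
    intro P hc _
    have : P = ∅ := Finset.card_eq_zero.mp (Nat.le_zero.mp hc)
    exact ⟨leaf, by rw [this]; rfl⟩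
  | succ N ih =>
    intro P hc hcl
    rcases P.eq_empty_or_nonempty with rfl | hne
    · exact ⟨leaf, rfl⟩
    · have hnil : ([] : List (Fin k)) ∈ P := by
        obtain ⟨w, hw⟩ := hne
        exact hcl w hw [] (List.nil_prefix)
      -- children sets
      set Q : Fin k → Finset (List (Fin k)) :=
        fun i => P.preimage (List.cons i) (Set.injOn_of_injective
          (fun a b h => (List.cons_eq_cons.mp h).2)) with hQ
      have hQmem : ∀ i w, w ∈ Q i ↔ (i :: w) ∈ P := by
        intro i w; simp [hQ]
      have hdecomp : P = insert [] (Finset.univ.biUnion fun i => (Q i).image (List.cons i)) := by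
        ext w
        simp only [Finset.mem_insert, Finset.mem_biUnion, Finset.mem_univ, true_and,
          Finset.mem_image]
        constructor
        · intro hw
          cases w with
          | nil => exact Or.inl rfl
          | cons i w' => exact Or.inr ⟨i, w', (hQmem i w').mpr hw, rfl⟩
        · rintro (rfl | ⟨i, w', hw', rfl⟩)
          · exact hnil
          · exact (hQmem i w').mp hw'
      have hcard : P.card = 1 + ∑ i, (Q i).card := by
        rw [hdecomp]
        rw [Finset.card_insert_of_notMem]
        · rw [Finset.card_biUnion]
          · rw [Nat.add_comm]
            congr 1
            exact Finset.sum_congr rfl fun i _ =>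
              (Finset.card_image_of_injective _ (fun a b h => (List.cons_eq_cons.mp h).2))
          · intro i _ j _ hij s hs1 hs2 w hw
            exfalso
            have h1 := hs1 hw
            have h2 := hs2 hw
            simp only [Finset.mem_image] at h1 h2
            obtain ⟨w1, _, rfl⟩ := h1
            obtain ⟨w2, _, he⟩ := h2
            exact hij ((List.cons_eq_cons.mp he).1.symm)
        · simp only [Finset.mem_biUnion, Finset.mem_univ, true_and, Finset.mem_image, not_exists]
          rintro i w ⟨_, he⟩
          exact List.cons_ne_nil _ _ he
      have hQcl : ∀ i, ∀ w ∈ Q i, ∀ p : List (Fin k), p <+: w → p ∈ Q i := by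
        intro i w hw p hp
        rw [hQmem]
        refine hcl (i :: w) ((hQmem i w).mp hw) (i :: p) ?_
        obtain ⟨r, hr⟩ := hp
        exact ⟨r, by rw [List.cons_append, hr]⟩
      have hQle : ∀ i, (Q i).card ≤ N := by
        intro i
        have h1 : (Q i).card ≤ ∑ j, (Q j).card := by
          exact Finset.single_le_sum (f := fun j => (Q j).card) (fun _ _ => Nat.zero_le _)
            (Finset.mem_univ i)
        omega
      have hsub : ∀ i : Fin k, ∃ t : KTree k, toFinset t = Q i := fun i =>
        ih (Q i) (hQle i) (hQcl i)
      choose f hf using hsub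
      refine ⟨node f, ?_⟩
      rw [toFinset, hdecomp]
      congr 1
      apply Finset.biUnion_congr rfl
      intro i _
      rw [hf i]

end KTree

/-! rotation machinery -/

def rot (r : ℕ) (l : List Bool) : List Bool := l.drop r ++ l.take r

@[simp] lemma length_rot (r : ℕ) (l : List Bool) : (rot r l).length = l.length := by
  simp [rot]; omega

@[simp] lemma count_rot (r : ℕ) (l : List Bool) (b : Bool) :
    (rot r l).count b = l.count b := by
  rw [rot, List.count_append, Nat.add_comm, ← List.count_append, List.take_append_drop]

@[simp] lemma rot_zero (l : List Bool) : rot 0 l = l := by simp [rot]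

lemma rot_rot (l : List Bool) (r : ℕ) (hr : r ≤ l.length) :
    rot (l.length - r) (rot r l) = l := by
  have h1 : (l.drop r).length = l.length - r := by simp
  rw [rot, rot, List.take_left' h1, List.drop_left' h1, List.take_append_drop]

lemma wsum_take_rot_low {k : ℕ} (l : List Bool) (r j : ℕ) (hr : r ≤ l.length)
    (hj : j ≤ l.length - r) :
    wsum k ((rot r l).take j) = wsum k (l.take (r + j)) - wsum k (l.take r) := by
  have h1 : (l.drop r).length = l.length - r := by simp
  rw [rot, List.take_append_of_le_length (by omega)]
  have h2 : l.take (r + j) = l.take r ++ (l.drop r).take j := List.take_add ..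
  rw [h2, wsum_append]
  ring

lemma wsum_take_rot_high {k : ℕ} (l : List Bool) (r j : ℕ) (hr : r ≤ l.length)
    (hj1 : l.length - r ≤ j) (hj2 : j ≤ l.length) :
    wsum k ((rot r l).take j) =
      wsum k l - wsum k (l.take r) + wsum k (l.take (j - (l.length - r))) := by
  have h1 : (l.drop r).length = l.length - r := by simp
  obtain ⟨d, rfl⟩ : ∃ d, j = (l.length - r) + d := ⟨j - (l.length - r), by omega⟩
  rw [Nat.add_sub_cancel_left]
  rw [rot, ← h1, List.take_append, wsum_append, List.take_of_length_le (by omega),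
    Nat.add_sub_cancel_left]
  have h3 : (l.take r).take d = l.take d := by
    rw [List.take_take]
    congr 1
    omega
  rw [h3]
  have h4 : wsum k (l.drop r) = wsum k l - wsum k (l.take r) := by
    have : wsum k (l.take r) + wsum k (l.drop r) = wsum k l := by
      rw [← wsum_append, List.take_append_drop]
    omega
  rw [h4]

lemma good_rot_exists {k : ℕ} (l : List Bool) (hm : 1 ≤ l.length)
    (hsum : wsum k l = -1) : ∃ r < l.length, Good k (rot r l) := by
  classical
  set m := l.length with hmm
  set T : ℕ → ℤ := fun j => wsum k (l.take j) with hT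
  have hT0 : T 0 = 0 := by simp [hT]
  have hTm : T m = -1 := by simp [hT, hmm, List.take_length, hsum]
  have hne : (Finset.Icc 1 m).Nonempty := ⟨1, by simp; omega⟩
  set μ := (Finset.Icc 1 m).inf' hne T with hμ
  have hCne : ((Finset.Icc 1 m).filter (fun j => T j = μ)).Nonempty := by
    obtain ⟨j₀, hj₀, hj₀e⟩ := Finset.exists_mem_eq_inf' hne T
    exact ⟨j₀, Finset.mem_filter.mpr ⟨hj₀, hj₀e.symm⟩⟩
  set r := ((Finset.Icc 1 m).filter (fun j => T j = μ)).min' hCne with hr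
  have hrmem := Finset.min'_mem _ hCne
  rw [Finset.mem_filter, Finset.mem_Icc] at hrmem
  obtain ⟨⟨hr1, hrm⟩, hrμ⟩ := hrmem
  have hmin : ∀ t, 1 ≤ t → t ≤ m → μ ≤ T t := fun t h1 h2 =>
    Finset.inf'_le T (Finset.mem_Icc.mpr ⟨h1, h2⟩)
  have hstrict : ∀ t, 1 ≤ t → t < r → μ + 1 ≤ T t := by
    intro t h1 h2
    have hne2 : T t ≠ μ := by
      intro he
      have : r ≤ t := Finset.min'_le _ t (Finset.mem_filter.mpr
        ⟨Finset.mem_Icc.mpr ⟨h1, by omega⟩, he⟩)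
      omega
    have := hmin t h1 (by omega)
    omega
  rcases eq_or_lt_of_le hrm with hreq | hrlt
  · -- r = m : the word itself is good
    refine ⟨0, by omega, ?_⟩
    rw [rot_zero]
    intro j hj
    rcases Nat.eq_zero_or_pos j with rfl | hjpos
    · simp
    · have := hstrict j hjpos (by omega)
      have : μ + 1 ≤ T j := this
      have hμm : μ = -1 := by rw [← hrμ, hreq]; exact hTm
      show (0:ℤ) ≤ wsum k (l.take j)
      rw [show wsum k (l.take j) = T j from rfl]
      omega
  · -- r < m
    refine ⟨r, hrlt, ?_⟩
    intro j hj
    rw [length_rot] at hj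
    rcases le_or_gt j (m - r) with hle | hgt
    · rw [wsum_take_rot_low l r j (by omega) hle]
      have : μ ≤ T (r + j) := hmin (r + j) (by omega) (by omega)
      have h2 : T r = μ := hrμ
      show (0:ℤ) ≤ T (r+j) - T r
      omega
    · rw [wsum_take_rot_high l r j (by omega) (by omega) (by omega)]
      have ht' : 1 ≤ j - (m - r) ∧ j - (m - r) < r := by omega
      have := hstrict _ ht'.1 ht'.2
      have h2 : T r = μ := hrμ
      show (0:ℤ) ≤ wsum k l - T r + T (j - (m - r))
      omega

lemma good_rot_unique {k : ℕ} (l : List Bool) (hsum : wsum k l = -1)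
    (r₁ r₂ : ℕ) (h1 : r₁ < l.length) (h2 : r₂ < l.length)
    (hg1 : Good k (rot r₁ l)) (hg2 : Good k (rot r₂ l)) : r₁ = r₂ := by
  set m := l.length with hmm
  set T : ℕ → ℤ := fun j => wsum k (l.take j) with hT
  have hTm : T m = -1 := by simp [hT, hmm, List.take_length, hsum]
  -- wlog via a helper
  have key : ∀ s₁ s₂ : ℕ, s₁ < s₂ → s₂ < m → Good k (rot s₁ l) → Good k (rot s₂ l) → False := by
    intro s₁ s₂ hlt hs2 hgg1 hgg2
    rcases Nat.eq_zero_or_pos s₁ with rfl | hs1pos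
    · -- s₁ = 0
      have ha : (0:ℤ) ≤ T s₂ := by
        have := hgg1 s₂ (by rw [length_rot]; omega)
        rwa [rot_zero] at this
      have hb : T s₂ ≤ -1 := by
        have := hgg2 (m - s₂) (by rw [length_rot]; omega)
        rw [wsum_take_rot_low l s₂ (m - s₂) (by omega) (le_refl _)] at this
        rw [show s₂ + (m - s₂) = m by omega] at this
        have : (0:ℤ) ≤ T m - T s₂ := this
        omega
      omega
    · have ha : (0:ℤ) ≤ T s₂ - T s₁ := by
        have := hgg1 (s₂ - s₁) (by rw [length_rot]; omega)
        rw [wsum_take_rot_low l s₁ (s₂ - s₁) (by omega) (by omega)] at this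
        rw [show s₁ + (s₂ - s₁) = s₂ by omega] at this
        exact this
      have hb : (0:ℤ) ≤ T m - T s₂ + T s₁ := by
        have := hgg2 (s₁ + (m - s₂)) (by rw [length_rot]; omega)
        rw [wsum_take_rot_high l s₂ (s₁ + (m - s₂)) (by omega) (by omega) (by omega)] at this
        rw [show s₁ + (m - s₂) - (m - s₂) = s₁ by omega, hsum] at this
        rw [hTm]
        exact this
      -- also strictness from hgg2 : s₁ ∈ [1, s₂) gives T s₁ ≥ T s₂ + 1
      omega
  rcases lt_trichotomy r₁ r₂ with h | h | h
  · exact absurd (key r₁ r₂ h h2 hg1 hg2) (by simp)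
  · exact h
  · exact absurd (key r₂ r₁ h h1 hg2 hg1) (by simp)

/-! counting -/

lemma count_ofFn {m : ℕ} (g : Fin m → Bool) :
    (List.ofFn g).count true = ∑ i, if g i = true then 1 else 0 := by
  induction m with
  | zero => simp
  | succ m ih =>
    rw [List.ofFn_succ, List.count_cons, Fin.sum_univ_succ, ih]
    cases hg : g 0 <;> simp [hg] <;> omega

lemma count_eq_sum (l : List Bool) :
    l.count true = ∑ i : Fin l.length, if l.get i = true then 1 else 0 := by
  conv_lhs => rw [← List.ofFn_get l]
  rw [count_ofFn]

lemma card_words (m n : ℕ) :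
    Nat.card {w : List Bool // w.length = m ∧ w.count true = n} = m.choose n := by
  classical
  set f : {s : Finset (Fin m) // s.card = n} → {w : List Bool // w.length = m ∧ w.count true = n} :=
    fun s => ⟨List.ofFn (fun i => decide ((i : Fin m) ∈ s.val)), by
      refine ⟨by simp, ?_⟩
      rw [count_ofFn]
      have : ∀ i : Fin m, (if decide (i ∈ s.val) = true then (1:ℕ) else 0)
          = if i ∈ s.val then 1 else 0 := by intro i; simp
      rw [Finset.sum_congr rfl (fun i _ => this i), ← Finset.card_filter]
      rw [show Finset.univ.filter (fun i => i ∈ s.val) = s.val by ext i; simp]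
      exact s.2⟩ with hf
  have hbij : Function.Bijective f := by
    constructor
    · intro s₁ s₂ he
      have := congrArg Subtype.val he
      simp only [hf] at this
      have := List.ofFn_inj.mp this
      ext i
      constructor <;> intro hi
      · have := congrFun this i; simpa [hi] using this.symm
      · have := congrFun this i; simpa [hi] using this
    · rintro ⟨w, hw1, hw2⟩
      subst hw1
      refine ⟨⟨Finset.univ.filter (fun i => w.get i = true), ?_⟩, ?_⟩
      · rw [← hw2, count_eq_sum, Finset.card_filter]
      · apply Subtype.ext
        simp only [hf]
        apply List.ext_get (by simp)
        intro i h1 h2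
        simp [List.get_ofFn]
  rw [← Nat.card_eq_of_bijective f hbij, Nat.card_eq_fintype_card]
  simp [Fintype.card_finset_len]

lemma card_words_eq_mul_good {k n : ℕ} (hk : 1 ≤ k) (hn : 1 ≤ n) :
    (k * n + 1).choose n =
      Nat.card {w : List Bool // Good k w ∧ w.length = k * n + 1 ∧ w.count true = n}
        * (k * n + 1) := by
  classical
  set m := k * n + 1 with hm
  have hsum : ∀ w : List Bool, w.length = m → w.count true = n → wsum k w = -1 := by
    intro w h1 h2
    rw [wsum_eq, h1, h2, hm]
    push_cast
    ring
  set W := {w : List Bool // w.length = m ∧ w.count true = n} with hW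
  set G := {w : List Bool // Good k w ∧ w.length = m ∧ w.count true = n} with hG
  set f : G × Fin m → W := fun p =>
    ⟨rot (m - (p.2 : ℕ)) p.1.val,
      by rw [length_rot]; exact p.1.2.2.1, by rw [count_rot]; exact p.1.2.2.2⟩ with hf
  have hrr : ∀ (g : G) (s : Fin m), rot (s : ℕ) (rot (m - (s : ℕ)) g.val) = g.val := by
    intro g s
    have hlen : g.val.length = m := g.2.2.1
    have := rot_rot g.val (m - (s : ℕ)) (by omega)
    rw [hlen] at this
    rw [show m - (m - (s : ℕ)) = (s : ℕ) by have := s.2; omega] at this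
    exact this
  have hbij : Function.Bijective f := by
    constructor
    · rintro ⟨g, s⟩ ⟨g', s'⟩ he
      have hval : rot (m - (s : ℕ)) g.val = rot (m - (s' : ℕ)) g'.val :=
        congrArg Subtype.val he
      have hwlen : (rot (m - (s : ℕ)) g.val).length = m := by rw [length_rot]; exact g.2.2.1
      have hwcount : (rot (m - (s : ℕ)) g.val).count true = n := by
        rw [count_rot]; exact g.2.2.2
      have hg1 : Good k (rot (s : ℕ) (rot (m - (s : ℕ)) g.val)) := by
        rw [hrr g s]; exact g.2.1
      have hg2 : Good k (rot (s' : ℕ) (rot (m - (s : ℕ)) g.val)) := by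
        rw [hval, hrr g' s']; exact g'.2.1
      have hs : (s : ℕ) = (s' : ℕ) := good_rot_unique _ (hsum _ hwlen hwcount)
        _ _ (by rw [hwlen]; exact s.2) (by rw [hwlen]; exact s'.2) hg1 hg2
      have hseq : s = s' := Fin.ext hs
      subst hseq
      have : g.val = g'.val := by rw [← hrr g s, ← hrr g' s, hval]
      exact Prod.ext (Subtype.ext this) rfl
    · rintro ⟨w, hw1, hw2⟩
      obtain ⟨r, hr, hgood⟩ := good_rot_exists (k := k) w (by rw [hw1]; omega)
        (hsum w hw1 hw2)
      refine ⟨⟨⟨rot r w, hgood, by rw [length_rot]; exact hw1, by rw [count_rot]; exact hw2⟩,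
        ⟨r, by rw [hw1] at hr; exact hr⟩⟩, ?_⟩
      apply Subtype.ext
      show rot (m - r) (rot r w) = w
      rw [← hw1, rot_rot w r (by omega)]
  have h1 : Nat.card W = Nat.card G * m := by
    rw [← Nat.card_eq_of_bijective f hbij, Nat.card_prod, Nat.card_eq_fintype_card (α := Fin m),
      Fintype.card_fin]
  have h2 : Nat.card W = m.choose n := by rw [hW]; exact card_words m n
  rw [← h2, h1]


lemma card_trees_eq_card_prefix_closed (k n : ℕ) :
    Nat.card {t : KTree k // KTree.internals t = n} =
      Nat.card {P : Finset (List (Fin k)) //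
        P.card = n ∧ ∀ w ∈ P, ∀ p : List (Fin k), p <+: w → p ∈ P} := by
  apply Nat.card_eq_of_bijective
    (f := fun t => ⟨KTree.toFinset t.val,
      by rw [KTree.card_toFinset]; exact t.2, KTree.toFinset_prefix_closed t.val⟩)
  constructor
  · intro t₁ t₂ he
    have := congrArg Subtype.val he
    exact Subtype.ext (KTree.toFinset_injective this)
  · rintro ⟨P, hP1, hP2⟩
    obtain ⟨t, ht⟩ := KTree.exists_toFinset P.card P (le_refl _) hP2
    refine ⟨⟨t, ?_⟩, Subtype.ext ht⟩
    rw [← KTree.card_toFinset, ht, hP1]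

lemma card_trees_eq_card_good (k n : ℕ) :
    Nat.card {t : KTree k // KTree.internals t = n} =
      Nat.card {w : List Bool // Good k w ∧ w.length = k * n + 1 ∧ w.count true = n} := by
  apply Nat.card_eq_of_bijective
    (f := fun t => ⟨KTree.code t.val, (KTree.isBlock_code t.val).1,
      by rw [KTree.length_code, t.2], by rw [KTree.count_code]; exact t.2⟩)
  constructor
  · intro t₁ t₂ he
    have := congrArg Subtype.val he
    exact Subtype.ext (KTree.code_injective this)
  · rintro ⟨w, hw1, hw2, hw3⟩
    have hsum : wsum k w = -1 := by
      rw [wsum_eq, hw2, hw3]; push_cast; ring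
    obtain ⟨t, ht⟩ := KTree.exists_code w.length w (le_refl _) hw1 hsum
    refine ⟨⟨t, ?_⟩, Subtype.ext ht⟩
    have := KTree.count_code t
    rw [ht, hw3] at this
    exact this.symm

/-- For all integers `n ≥ 1` and `k ≥ 1`, `n` times the number of finite sets `P` of
words over a `k`-letter alphabet with `|P| = n` that are closed under taking prefixes
(in particular the empty word lies in `P`, and deleting the last letter of any
nonempty word of `P` yields a word of `P`) equals `C(kn, n-1)`; i.e. the number of
such prefix-closed sets is the `(n,k)`-th Catalan number `(1/n)·C(kn, n-1)`. -/
theorem nk_catalan_counts_prefix_closed_sets (n k : ℕ) (hn : 1 ≤ n) (hk : 1 ≤ k) :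
    n * ({P : Finset (List (Fin k)) |
        P.card = n ∧
        ∀ w ∈ P, ∀ p : List (Fin k), p <+: w → p ∈ P} : Set _).ncard =
      (k * n).choose (n - 1) := by
  have hset : ({P : Finset (List (Fin k)) |
        P.card = n ∧
        ∀ w ∈ P, ∀ p : List (Fin k), p <+: w → p ∈ P} : Set _).ncard =
      Nat.card {P : Finset (List (Fin k)) //
        P.card = n ∧ ∀ w ∈ P, ∀ p : List (Fin k), p <+: w → p ∈ P} := by
    rw [← Nat.card_coe_set_eq]
    exact Nat.card_congr (Equiv.subtypeEquivRight (fun P => Iff.rfl))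
  rw [hset, ← card_trees_eq_card_prefix_closed, card_trees_eq_card_good]
  set G := Nat.card {w : List Bool // Good k w ∧ w.length = k * n + 1 ∧ w.count true = n}
    with hGdef
  have hG : (k * n + 1).choose n = G * (k * n + 1) := card_words_eq_mul_good hk hn
  have h1 : (k * n + 1) * ((k * n).choose (n - 1)) = (k * n + 1).choose n * n := by
    have := Nat.add_one_mul_choose_eq (k * n) (n - 1)
    simp only [Nat.succ_eq_add_one, show n - 1 + 1 = n from by omega] at this
    exact this
  have h2 : (k * n + 1) * (n * G) = (k * n + 1) * ((k * n).choose (n - 1)) := by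
    rw [h1, hG]; ring
  exact Nat.eq_of_mul_eq_mul_left (by omega) h2
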